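/- An element b^x a^y of ZM(m,n,r) centralizes the subgroup ⟨a^{m₁}, b^{n₁}⟩ if and only if ord_{m/m₁}(r) divides x and m/gcd(m, r^{n₁}−1) divides y. -/

import Mathlib

/-- `ordMod m r` is the multiplicative order of `r` modulo `m`. -/
noncomputable def ordMod (m r : ℕ) : ℕ := orderOf (r : ZMod m)

private lemma mem_centralizer_pair {G : Type*} [Group G] (u v g : G) :
    g ∈ Subgroup.centralizer ((Subgroup.closure {u, v} : Subgroup G) : Set G) ↔
      u * g = g * u ∧ v * g = g * v := by
  constructor
  · intro h
    rw [Subgroup.mem_centralizer_iff] at h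
    exact ⟨h u (Subgroup.subset_closure (by simp)),
      h v (Subgroup.subset_closure (by simp))⟩
  · rintro ⟨h1, h2⟩
    rw [Subgroup.centralizer_closure]
    rw [Subgroup.mem_centralizer_iff]
    rintro z (rfl | rfl)
    · exact h1
    · exact h2

private lemma dvd_mul_iff_div_gcd_dvd {m d y : ℕ} (hm : 0 < m) :
    m ∣ y * d ↔ m / Nat.gcd m d ∣ y := by
  set g := Nat.gcd m d with hg
  have hgpos : 0 < g := Nat.gcd_pos_of_pos_left d hm
  have hgm : g ∣ m := Nat.gcd_dvd_left m d
  have hgd : g ∣ d := Nat.gcd_dvd_right m d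
  constructor
  · rintro ⟨c, hc⟩
    have hcop : Nat.Coprime (m / g) (d / g) := Nat.coprime_div_gcd_div_gcd hgpos
    have key : y * (d / g) = (m / g) * c := by
      apply Nat.eq_of_mul_eq_mul_left hgpos
      calc g * (y * (d / g)) = y * (g * (d / g)) := by ring
        _ = y * d := by rw [Nat.mul_div_cancel' hgd]
        _ = m * c := hc
        _ = g * ((m / g) * c) := by rw [← Nat.mul_assoc, Nat.mul_div_cancel' hgm]
    exact hcop.dvd_of_dvd_mul_right ⟨c, key⟩
  · rintro ⟨t, rfl⟩
    refine ⟨t * (d / g), ?_⟩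
    calc m / g * t * d = m / g * t * (g * (d / g)) := by rw [Nat.mul_div_cancel' hgd]
      _ = (g * (m / g)) * (t * (d / g)) := by ring
      _ = m * (t * (d / g)) := by rw [Nat.mul_div_cancel' hgm]

/-- `b^x a^y` centralizes `⟨a^{m₁}, b^{n₁}⟩` iff `ord_{m/m₁}(r) ∣ x` and
`m / gcd(m, r^{n₁}-1) ∣ y`. -/
theorem stmt_9 {G : Type*} [Group G] [Finite G]
    (m n r : ℕ) (hm : 0 < m) (hn : 0 < n)
    (hgcd1 : Nat.gcd m n = 1) (hgcd2 : Nat.gcd m (r - 1) = 1)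
    (hrn : r ^ n % m = 1 % m)
    (a b : G) (ha : orderOf a = m) (hb : orderOf b = n)
    (hrel : b⁻¹ * a * b = a ^ r)
    (hgen : Subgroup.closure {a, b} = ⊤)
    (hcard : Nat.card G = m * n)
    (m₁ n₁ : ℕ) (hm₁ : m₁ ∣ m) (hn₁ : n₁ ∣ n)
    (x y : ℕ) (hx : x < n) (hy : y < m) :
    b ^ x * a ^ y ∈
        Subgroup.centralizer ((Subgroup.closure {a ^ m₁, b ^ n₁} : Subgroup G) : Set G) ↔
      ordMod (m / m₁) r ∣ x ∧ m / Nat.gcd m (r ^ n₁ - 1) ∣ y := by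
  have hm₁pos : 0 < m₁ := Nat.pos_of_dvd_of_pos hm₁ hm
  -- basic commutation: a^t * b = b * a^(t*r)
  have hab : a * b = b * a ^ r := by
    rw [← hrel]; group
  have L0 : ∀ t : ℕ, a ^ t * b = b * a ^ (t * r) := by
    intro t
    induction t with
    | zero => simp
    | succ t ih =>
      calc a ^ (t + 1) * b = a ^ t * (a * b) := by rw [pow_succ]; group
        _ = a ^ t * b * a ^ r := by rw [hab]; group
        _ = b * (a ^ (t * r) * a ^ r) := by rw [ih]; group
        _ = b * a ^ ((t + 1) * r) := by rw [← pow_add, Nat.succ_mul]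
  have L1 : ∀ (k j : ℕ), a ^ k * b ^ j = b ^ j * a ^ (k * r ^ j) := by
    intro k j
    induction j with
    | zero => simp
    | succ j ih =>
      calc a ^ k * b ^ (j + 1) = a ^ k * b ^ j * b := by rw [pow_succ]; group
        _ = b ^ j * (a ^ (k * r ^ j) * b) := by rw [ih]; group
        _ = b ^ j * (b * a ^ (k * r ^ j * r)) := by rw [L0]
        _ = b ^ (j + 1) * a ^ (k * r ^ (j + 1)) := by
            rw [pow_succ, pow_succ, Nat.mul_assoc]; group
  rw [mem_centralizer_pair]
  -- first condition
  have C1 : (a ^ m₁ * (b ^ x * a ^ y) = b ^ x * a ^ y * a ^ m₁) ↔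
      ordMod (m / m₁) r ∣ x := by
    have e1 : a ^ m₁ * (b ^ x * a ^ y) = b ^ x * a ^ (m₁ * r ^ x + y) := by
      rw [← mul_assoc, L1, pow_add]; group
    have e2 : b ^ x * a ^ y * a ^ m₁ = b ^ x * a ^ (y + m₁) := by
      rw [pow_add]; group
    rw [e1, e2, mul_right_inj, pow_eq_pow_iff_modEq, ha]
    have hmm : m = m₁ * (m / m₁) := (Nat.mul_div_cancel' hm₁).symm
    constructor
    · intro h
      have h' : m₁ * r ^ x ≡ m₁ * 1 [MOD m₁ * (m / m₁)] := by
        rw [Nat.mul_one, ← hmm]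
        have := Nat.ModEq.add_right_cancel' y
          (by rwa [Nat.add_comm y m₁] at h : m₁ * r ^ x + y ≡ m₁ + y [MOD m])
        exact this
      have h'' : r ^ x ≡ 1 [MOD m / m₁] :=
        Nat.ModEq.mul_left_cancel' hm₁pos.ne' h'
      rw [ordMod, orderOf_dvd_iff_pow_eq_one, ← Nat.cast_pow, ← Nat.cast_one,
        ZMod.natCast_eq_natCast_iff]
      exact h''
    · intro h
      rw [ordMod, orderOf_dvd_iff_pow_eq_one, ← Nat.cast_pow, ← Nat.cast_one,
        ZMod.natCast_eq_natCast_iff] at h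
      have h' : m₁ * r ^ x ≡ m₁ * 1 [MOD m₁ * (m / m₁)] := h.mul_left' m₁
      rw [Nat.mul_one, ← hmm] at h'
      have := h'.add_right y
      rwa [Nat.add_comm m₁ y] at this
  -- second condition
  have C2 : (b ^ n₁ * (b ^ x * a ^ y) = b ^ x * a ^ y * b ^ n₁) ↔
      m / Nat.gcd m (r ^ n₁ - 1) ∣ y := by
    have e1 : b ^ n₁ * (b ^ x * a ^ y) = b ^ (x + n₁) * a ^ y := by
      rw [pow_add]; group
    have e2 : b ^ x * a ^ y * b ^ n₁ = b ^ (x + n₁) * a ^ (y * r ^ n₁) := by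
      rw [mul_assoc, L1, pow_add]; group
    rw [e1, e2, mul_right_inj, pow_eq_pow_iff_modEq, ha]
    rcases Nat.eq_zero_or_pos r with rfl | hr
    · -- r = 0 forces m = 1
      have hm1 : m = 1 := by simpa using hgcd2
      subst hm1
      simp [Nat.ModEq, Nat.mod_one]
    · have hrp : 1 ≤ r ^ n₁ := Nat.one_le_pow _ _ hr
      set d := r ^ n₁ - 1 with hdd
      have hd : r ^ n₁ = d + 1 := (Nat.succ_pred_eq_of_pos hrp).symm
      have hmul : y * d + y = y * r ^ n₁ := by
        conv_rhs => rw [hd]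
        ring
      constructor
      · intro h
        have h' : y * d + y ≡ 0 + y [MOD m] := by
          rw [Nat.zero_add, hmul]
          exact h.symm
        have h'' := Nat.ModEq.add_right_cancel' y h'
        exact (dvd_mul_iff_div_gcd_dvd hm).1 (Nat.modEq_zero_iff_dvd.1 h'')
      · intro h
        have hdvd : m ∣ y * d := (dvd_mul_iff_div_gcd_dvd hm).2 h
        have h' : y * d + y ≡ 0 + y [MOD m] :=
          (Nat.modEq_zero_iff_dvd.2 hdvd).add_right y
        rw [Nat.zero_add, hmul] at h'
        exact h'.symm
  exact and_congr C1 C2
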